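/- Let p be an odd prime and let a, b ∈ ℤ/pℤ with a ≠ b. Let Q ∈ (ℤ/pℤ)[x] be the polynomial with (x - a)·(x - b)·Q = x^p - x. Then in (ℤ/pℤ)[x] one has the polynomial identity (b-a)^2·Q(x) + x = (b-a)·(y^{p-2} + y^{p-3} + ... + y^3 + y^2 + 2y + 1) + a, where y denotes the linear polynomial (b-a)^{-1}·(x - a). -/
import Mathlib

open Polynomial

/-- For an odd prime `p` and distinct `a b : ℤ/pℤ`, with `Q` the quotient of `x^p - x`
by `(x - a)(x - b)`, one has the polynomial identity
`(b-a)²·Q + x = (b-a)·((∑_{i=0}^{p-2} y^i) + y) + a`, where `y = (b-a)⁻¹·(x - a)`. -/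
theorem stmt_16 (p : ℕ) (hp : p.Prime) (hodd : Odd p) (a b : ZMod p) (hab : a ≠ b)
    (Q y : Polynomial (ZMod p))
    (hQ : ((X : Polynomial (ZMod p)) - C a) * (X - C b) * Q = X ^ p - X)
    (hy : y = C (b - a)⁻¹ * ((X : Polynomial (ZMod p)) - C a)) :
    C ((b - a) ^ 2) * Q + X =
      C (b - a) * ((∑ i ∈ Finset.range (p - 1), y ^ i) + y) + C a := by
  haveI : Fact p.Prime := ⟨hp⟩
  have hd : b - a ≠ 0 := sub_ne_zero.mpr (Ne.symm hab)
  set d := b - a with hdef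
  have hx : C d * y = X - C a := by
    rw [hy, ← mul_assoc, ← C_mul, mul_inv_cancel₀ hd, C_1, one_mul]
  have hx1 : C d * (y - 1) = X - C b := by
    have hb : (C b : Polynomial (ZMod p)) = C a + C d := by
      rw [← C_add, hdef]; ring_nf
    rw [mul_sub, hx, mul_one, hb]; ring
  have hyne : y ≠ 0 := by
    intro h
    exact X_sub_C_ne_zero a (by rw [← hx, h, mul_zero])
  have hy1ne : y - 1 ≠ 0 := by
    intro h
    exact X_sub_C_ne_zero b (by rw [← hx1, h, mul_zero])
  have hE : C (d ^ 2) * Q = C d * (∑ i ∈ Finset.range (p - 1), y ^ i) := by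
    apply mul_right_cancel₀ (mul_ne_zero hyne hy1ne)
    have hl : C (d ^ 2) * Q * (y * (y - 1)) = X ^ p - X := by
      rw [← hQ, ← hx, ← hx1, C_pow]; ring
    rw [hl]
    have hgeom : (∑ i ∈ Finset.range (p - 1), y ^ i) * (y - 1) = y ^ (p - 1) - 1 :=
      geom_sum_mul y (p - 1)
    have hp1 : p - 1 + 1 = p := Nat.succ_pred_eq_of_pos hp.pos
    have hyp : y ^ p = y ^ (p - 1) * y := by rw [← pow_succ, hp1]
    calc X ^ p - X = (X - C a) ^ p - (X - C a) := by
          rw [sub_pow_char, ← C_pow, ZMod.pow_card]; ring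
      _ = (C d * y) ^ p - C d * y := by rw [hx]
      _ = C d * (y ^ p - y) := by
          rw [mul_pow, ← C_pow, ZMod.pow_card]; ring
      _ = C d * (∑ i ∈ Finset.range (p - 1), y ^ i) * (y * (y - 1)) := by
          rw [hyp]; linear_combination (-(C d * y)) * hgeom
  rw [hE, mul_add]
  linear_combination -hx
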